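/- Multi-round convergence of the abstract fault-tolerant averaging iteration: let n, f be natural numbers with n > 3f, let Q ⊆ Fin n have complement of cardinality at most f, let d ≥ 0, T ≥ 0, ϑ ≥ 1, and K ≥ 1. Suppose t⁰, t¹, …, t^K : Q → ℝ are successive rounds of pulse instants such that for every k < K and every q ∈ Q there exists an observation vector x : Fin n → ℝ with x p ∈ [t^k p, t^k p + d] for all p ∈ Q, and t^{k+1} q = mid_f(x) + T_q^k for some T_q^k ∈ [T/ϑ, T]. Then for every k ≤ K: (i) max_{q∈Q} t^k q − min_{q∈Q} t^k q ≤ 2^{−k}·(max_{q∈Q} t⁰ q − min_{q∈Q} t⁰ q) + 2·(1 − 2^{−k})·(d + (1 − ϑ⁻¹)·T), and (ii) min_{q∈Q} t⁰ q + k·T/ϑ ≤ t^k q ≤ max_{q∈Q} t⁰ q + k·(T + d) for all q ∈ Q. (This combines Lemma 3 and Corollary 2 of the paper: over the K_A cycles of the two-stage absorption process, the pulsing intervals I_k of the nonfaulty nodes shrink geometrically to the steady-state precision 2(d + ρϑ⁻¹T) while advancing by roughly T per cycle.) -/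

import Mathlib

open Finset

/-- The `k`-th smallest entry (1-indexed, counted with multiplicity) of `x : Fin n → ℝ`. -/
noncomputable def orderStat {n : ℕ} (x : Fin n → ℝ) (k : ℕ) : ℝ :=
  ((Multiset.map x (Finset.univ : Finset (Fin n)).val).sort (· ≤ ·)).getD (k - 1) 0

/-- The `k`-th smallest (1-indexed, with multiplicity) of the `|G|` values `x i`, `i ∈ G`. -/
noncomputable def orderStatOn {n : ℕ} (G : Finset (Fin n)) (x : Fin n → ℝ) (k : ℕ) : ℝ :=
  ((Multiset.map x G.val).sort (· ≤ ·)).getD (k - 1) 0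

/-- The fault-tolerant midpoint `mid_f(x) = (x_(f+1) + x_(n−f))/2`. -/
noncomputable def ftMid (n f : ℕ) (x : Fin n → ℝ) : ℝ :=
  (orderStat x (f + 1) + orderStat x (n - f)) / 2

/-- If the complement of `G` has at most `f` elements and `n > 3f`, then `G` is nonempty. -/
lemma nonempty_of_compl {n f : ℕ} (hn : 3 * f < n) {G : Finset (Fin n)}
    (hG : Gᶜ.card ≤ f) : G.Nonempty := by
  rw [← Finset.card_pos]
  have h := Finset.card_compl G
  simp only [Fintype.card_fin] at h
  omega

/- ### Auxiliary list lemmas -/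

lemma aux_sorted_getElem_le {l : List ℝ} (hl : l.Pairwise (· ≤ ·)) {k : ℕ} (hk : k < l.length)
    {c : ℝ} (hc : k < l.countP (fun a => decide (a ≤ c))) : l[k] ≤ c := by
  by_contra h
  push_neg at h
  have hsplit : l.countP (fun a => decide (a ≤ c)) =
      (l.take k).countP (fun a => decide (a ≤ c)) +
      (l.drop k).countP (fun a => decide (a ≤ c)) := by
    conv_lhs => rw [← List.take_append_drop k l]
    rw [List.countP_append]
  have h2 : (l.drop k).countP (fun a => decide (a ≤ c)) = 0 := by
    rw [List.countP_eq_zero]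
    intro a ha
    simp only [decide_eq_true_eq]
    intro hac
    obtain ⟨i, hi, rfl⟩ := List.mem_iff_getElem.mp ha
    rw [List.getElem_drop] at hac
    have hki : k + i < l.length := by
      have := hi
      simp only [List.length_drop] at this
      omega
    have hrel := hl.rel_get_of_le (a := ⟨k, hk⟩) (b := ⟨k + i, hki⟩) (by simp [Fin.le_def])
    simp only [List.get_eq_getElem] at hrel
    exact absurd (le_trans hrel hac) (not_le.mpr h)
  have h3 : (l.take k).countP (fun a => decide (a ≤ c)) ≤ k := by
    calc (l.take k).countP (fun a => decide (a ≤ c)) ≤ (l.take k).length :=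
          List.countP_le_length
      _ ≤ k := by simp [List.length_take]
  omega

lemma aux_le_sorted_getElem {l : List ℝ} (hl : l.Pairwise (· ≤ ·)) {k : ℕ} (hk : k < l.length)
    {c : ℝ} (hc : l.countP (fun a => decide (a < c)) ≤ k) : c ≤ l[k] := by
  by_contra h
  push_neg at h
  have hall : ∀ a ∈ l.take (k + 1), a < c := by
    intro a ha
    obtain ⟨i, hi, rfl⟩ := List.mem_iff_getElem.mp ha
    rw [List.getElem_take]
    have hil : i < l.length := by
      have := hi; simp only [List.length_take] at this; omega
    have hik : i ≤ k := by
      have := hi; simp only [List.length_take] at this; omega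
    have hrel := hl.rel_get_of_le (a := ⟨i, hil⟩) (b := ⟨k, hk⟩) (by simp [Fin.le_def, hik])
    simp only [List.get_eq_getElem] at hrel
    exact lt_of_le_of_lt hrel h
  have hfull : (l.take (k + 1)).countP (fun a => decide (a < c)) = (l.take (k + 1)).length :=
    List.countP_eq_length.mpr (fun a ha => by simpa using hall a ha)
  have hlen : (l.take (k + 1)).length = k + 1 := by
    simp only [List.length_take]; omega
  have : (l.take (k + 1)).countP (fun a => decide (a < c)) ≤
      l.countP (fun a => decide (a < c)) := (List.take_sublist _ _).countP_le
  omega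

lemma aux_countP_ge {l : List ℝ} (hl : l.Pairwise (· ≤ ·)) {k : ℕ} (hk : k < l.length) :
    k + 1 ≤ l.countP (fun a => decide (a ≤ l[k])) := by
  have hall : ∀ a ∈ l.take (k + 1), a ≤ l[k] := by
    intro a ha
    obtain ⟨i, hi, rfl⟩ := List.mem_iff_getElem.mp ha
    rw [List.getElem_take]
    have hil : i < l.length := by
      have := hi; simp only [List.length_take] at this; omega
    have hik : i ≤ k := by
      have := hi; simp only [List.length_take] at this; omega
    have hrel := hl.rel_get_of_le (a := ⟨i, hil⟩) (b := ⟨k, hk⟩) (by simp [Fin.le_def, hik])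
    simpa using hrel
  have hfull : (l.take (k + 1)).countP (fun a => decide (a ≤ l[k])) = (l.take (k + 1)).length :=
    List.countP_eq_length.mpr (fun a ha => by simpa using hall a ha)
  have hlen : (l.take (k + 1)).length = k + 1 := by
    simp only [List.length_take]; omega
  have : (l.take (k + 1)).countP (fun a => decide (a ≤ l[k])) ≤
      l.countP (fun a => decide (a ≤ l[k])) := (List.take_sublist _ _).countP_le
  omega

/- ### Order statistic lemmas -/

section OrderStat

variable {n : ℕ} (x : Fin n → ℝ)

private noncomputable def osList : List ℝ :=
  ((Multiset.map x (Finset.univ : Finset (Fin n)).val).sort (· ≤ ·))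

lemma osList_length : (osList x).length = n := by
  simp [osList, Multiset.length_sort]

lemma osList_sorted : (osList x).Pairwise (· ≤ ·) := Multiset.pairwise_sort _ _

lemma osList_countP (P : ℝ → Prop) [DecidablePred P] :
    (osList x).countP (fun a => decide (P a)) =
      (Finset.univ.filter (fun i => P (x i))).card := by
  have h1 : (osList x).countP (fun a => decide (P a)) = Multiset.countP P (↑(osList x)) := by
    rw [Multiset.coe_countP]
  rw [h1]
  rw [show ((osList x : Multiset ℝ)) = Multiset.map x (Finset.univ : Finset (Fin n)).val from
    Multiset.sort_eq _ _]
  rw [Multiset.countP_map]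
  rfl

lemma orderStat_eq_getElem {k : ℕ} (hk1 : 1 ≤ k) (hkn : k ≤ n) :
    orderStat x k = (osList x)[k - 1]'(by rw [osList_length]; omega) := by
  rw [orderStat]
  exact List.getD_eq_getElem _ _ _

lemma orderStat_le_of_card {k : ℕ} (hk1 : 1 ≤ k) (hkn : k ≤ n) {c : ℝ}
    (hc : k ≤ (Finset.univ.filter (fun i => x i ≤ c)).card) : orderStat x k ≤ c := by
  rw [orderStat_eq_getElem x hk1 hkn]
  apply aux_sorted_getElem_le (osList_sorted x)
  rw [osList_countP x (fun a => a ≤ c)]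
  omega

lemma le_orderStat_of_card {k : ℕ} (hk1 : 1 ≤ k) (hkn : k ≤ n) {c : ℝ}
    (hc : (Finset.univ.filter (fun i => x i < c)).card < k) : c ≤ orderStat x k := by
  rw [orderStat_eq_getElem x hk1 hkn]
  apply aux_le_sorted_getElem (osList_sorted x)
  rw [osList_countP x (fun a => a < c)]
  omega

lemma card_le_orderStat {k : ℕ} (hk1 : 1 ≤ k) (hkn : k ≤ n) :
    k ≤ (Finset.univ.filter (fun i => x i ≤ orderStat x k)).card := by
  have hlt : k - 1 < (osList x).length := by rw [osList_length]; omega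
  have := aux_countP_ge (osList_sorted x) hlt
  rw [osList_countP x (fun a => a ≤ (osList x)[k-1])] at this
  rw [orderStat_eq_getElem x hk1 hkn]
  omega

end OrderStat

/- ### Midpoint lemmas -/

lemma ftMid_bounds {n f : ℕ} (hn : 3 * f < n) {Q : Finset (Fin n)} (hQ : Qᶜ.card ≤ f)
    {τ : Fin n → ℝ} {d : ℝ} {x : Fin n → ℝ}
    (hx : ∀ p ∈ Q, x p ∈ Set.Icc (τ p) (τ p + d)) (hne : Q.Nonempty) :
    Q.inf' hne τ ≤ ftMid n f x ∧ ftMid n f x ≤ Q.sup' hne τ + d := by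
  have hcard : n - f ≤ Q.card ∧ Q.card ≤ n := by
    have h := Finset.card_compl Q
    simp only [Fintype.card_fin] at h
    constructor
    · omega
    · exact (Finset.card_le_card (Finset.subset_univ Q)).trans_eq (by simp)
  set m := Q.inf' hne τ with hm
  set M := Q.sup' hne τ with hM
  have hQsub : ∀ {c : ℝ}, (∀ p ∈ Q, x p ≤ c) → Q.card ≤ (Finset.univ.filter (fun i => x i ≤ c)).card := by
    intro c hc
    apply Finset.card_le_card
    intro p hp
    simp only [Finset.mem_filter, Finset.mem_univ, true_and]
    exact hc p hp
  have hbelow : ∀ {c : ℝ}, (∀ p ∈ Q, c ≤ x p) →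
      (Finset.univ.filter (fun i => x i < c)).card ≤ f := by
    intro c hc
    refine le_trans (Finset.card_le_card ?_) hQ
    intro p hp
    simp only [Finset.mem_filter, Finset.mem_univ, true_and] at hp
    simp only [Finset.mem_compl]
    intro hpQ
    exact absurd (hc p hpQ) (not_le.mpr hp)
  have hxle : ∀ p ∈ Q, x p ≤ M + d := by
    intro p hp
    have := (hx p hp).2
    have h2 : τ p ≤ M := Finset.le_sup' τ hp
    linarith
  have hxge : ∀ p ∈ Q, m ≤ x p := by
    intro p hp
    have := (hx p hp).1
    have h2 : m ≤ τ p := Finset.inf'_le τ hp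
    linarith
  have ha1 : m ≤ orderStat x (f + 1) :=
    le_orderStat_of_card x (by omega) (by omega) (by have := hbelow hxge; omega)
  have ha2 : orderStat x (f + 1) ≤ M + d :=
    orderStat_le_of_card x (by omega) (by omega) (by have := hQsub hxle; omega)
  have hb1 : m ≤ orderStat x (n - f) :=
    le_orderStat_of_card x (by omega) (by omega) (by have := hbelow hxge; omega)
  have hb2 : orderStat x (n - f) ≤ M + d :=
    orderStat_le_of_card x (by omega) (by omega) (by have := hQsub hxle; omega)
  constructor
  · rw [ftMid]; linarith
  · rw [ftMid]; linarith

lemma ftMid_cross {n f : ℕ} (hn : 3 * f < n) {Q : Finset (Fin n)} (hQ : Qᶜ.card ≤ f)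
    {τ : Fin n → ℝ} {d : ℝ} {x y : Fin n → ℝ}
    (hx : ∀ p ∈ Q, x p ∈ Set.Icc (τ p) (τ p + d))
    (hy : ∀ p ∈ Q, y p ∈ Set.Icc (τ p) (τ p + d)) (hne : Q.Nonempty) :
    ftMid n f x - ftMid n f y ≤ (Q.sup' hne τ - Q.inf' hne τ) / 2 + d := by
  have hcard : n - f ≤ Q.card ∧ Q.card ≤ n := by
    have h := Finset.card_compl Q
    simp only [Fintype.card_fin] at h
    constructor
    · omega
    · exact (Finset.card_le_card (Finset.subset_univ Q)).trans_eq (by simp)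
  set m := Q.inf' hne τ with hm
  set M := Q.sup' hne τ with hM
  -- cross bound: orderStat x (f+1) ≤ orderStat y (n-f) + d
  have hFcard : n - f ≤ (Finset.univ.filter (fun i => y i ≤ orderStat y (n - f))).card :=
    card_le_orderStat y (by omega) (by omega)
  set F := Finset.univ.filter (fun i => y i ≤ orderStat y (n - f)) with hF
  have hinter : f + 1 ≤ (Q ∩ F).card := by
    have h1 := Finset.card_inter_add_card_union Q F
    have h2 : (Q ∪ F).card ≤ n :=
      (Finset.card_le_card (Finset.subset_univ _)).trans_eq (by simp)
    omega
  have hcross : orderStat x (f + 1) ≤ orderStat y (n - f) + d := by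
    apply orderStat_le_of_card x (by omega) (by omega)
    refine le_trans hinter (Finset.card_le_card ?_)
    intro p hp
    rw [Finset.mem_inter] at hp
    obtain ⟨hpQ, hpF⟩ := hp
    rw [hF, Finset.mem_filter] at hpF
    simp only [Finset.mem_filter, Finset.mem_univ, true_and]
    have h1 := (hx p hpQ).2
    have h2 := (hy p hpQ).1
    have h3 := hpF.2
    linarith
  -- other bounds
  have hbx : orderStat x (n - f) ≤ M + d := by
    apply orderStat_le_of_card x (by omega) (by omega)
    refine le_trans hcard.1 (Finset.card_le_card (fun p hp => ?_))
    simp only [Finset.mem_filter, Finset.mem_univ, true_and]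
    have := (hx p hp).2
    have h2 : τ p ≤ M := Finset.le_sup' τ hp
    linarith
  have hay : m ≤ orderStat y (f + 1) := by
    apply le_orderStat_of_card y (by omega) (by omega)
    have hsub : (Finset.univ.filter (fun i => y i < m)).card ≤ f := by
      refine le_trans (Finset.card_le_card ?_) hQ
      intro p hp
      simp only [Finset.mem_filter, Finset.mem_univ, true_and] at hp
      simp only [Finset.mem_compl]
      intro hpQ
      have := (hy p hpQ).1
      have h2 : m ≤ τ p := Finset.inf'_le τ hpQ
      linarith
    omega
  rw [ftMid, ftMid]
  linarith

/-- Multi-round convergence of the abstract fault-tolerant averaging iteration: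
the pulse spread shrinks geometrically to the steady-state precision while the
pulses advance by roughly `T` per round. -/
theorem stmt_9 (n f : ℕ) (hn : 3 * f < n) (Q : Finset (Fin n)) (hQ : Qᶜ.card ≤ f)
    (d T ϑ : ℝ) (hd : 0 ≤ d) (hT : 0 ≤ T) (hϑ : 1 ≤ ϑ)
    (K : ℕ) (hK : 1 ≤ K) (t : ℕ → Fin n → ℝ)
    (hstep : ∀ k < K, ∀ q ∈ Q, ∃ x : Fin n → ℝ,
      (∀ p ∈ Q, x p ∈ Set.Icc (t k p) (t k p + d)) ∧
        ∃ Tq ∈ Set.Icc (T / ϑ) T, t (k + 1) q = ftMid n f x + Tq) :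
    ∀ k ≤ K,
      (Q.sup' (nonempty_of_compl hn hQ) (t k) - Q.inf' (nonempty_of_compl hn hQ) (t k) ≤
        (2 : ℝ) ^ (-(k : ℤ)) *
            (Q.sup' (nonempty_of_compl hn hQ) (t 0) - Q.inf' (nonempty_of_compl hn hQ) (t 0))
          + 2 * (1 - (2 : ℝ) ^ (-(k : ℤ))) * (d + (1 - ϑ⁻¹) * T)) ∧
      (∀ q ∈ Q,
        Q.inf' (nonempty_of_compl hn hQ) (t 0) + k * (T / ϑ) ≤ t k q ∧
          t k q ≤ Q.sup' (nonempty_of_compl hn hQ) (t 0) + k * (T + d)) := by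
  have hne := nonempty_of_compl hn hQ
  have hϑ0 : (0:ℝ) < ϑ := lt_of_lt_of_le one_pos hϑ
  have hdiv : T / ϑ = ϑ⁻¹ * T := by rw [div_eq_mul_inv]; ring
  intro k
  induction k with
  | zero =>
    intro _
    constructor
    · norm_num
    · intro q hq
      constructor
      · simp only [Nat.cast_zero, zero_mul, add_zero]; exact Finset.inf'_le (t 0) hq
      · simp only [Nat.cast_zero, zero_mul, add_zero]; exact Finset.le_sup' (t 0) hq
  | succ k ih =>
    intro hk1
    have hkK : k < K := by omega
    obtain ⟨ihs, ihb⟩ := ih (by omega)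
    have hpow : (2 : ℝ) ^ (-((k + 1 : ℕ) : ℤ)) = (2 : ℝ) ^ (-(k : ℤ)) / 2 := by
      rw [show (-((k + 1 : ℕ) : ℤ)) = -(k : ℤ) + (-1) by push_cast; ring,
        zpow_add₀ (two_ne_zero), zpow_neg_one]
      ring
    constructor
    · obtain ⟨q, hq, hq'⟩ := Finset.exists_mem_eq_sup' hne (t (k + 1))
      obtain ⟨r, hr, hr'⟩ := Finset.exists_mem_eq_inf' hne (t (k + 1))
      obtain ⟨x, hx, Tx, hTx, hqx⟩ := hstep k hkK q hq
      obtain ⟨y, hy, Ty, hTy, hry⟩ := hstep k hkK r hr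
      have hcross := ftMid_cross hn hQ hx hy hne
      have hTdiff : Tx - Ty ≤ T - T / ϑ := by
        have := hTx.2
        have := hTy.1
        linarith
      rw [hpow, hq', hr', hqx, hry]
      rw [hdiv] at hTdiff
      linarith
    · intro q hq
      obtain ⟨x, hx, Tq, hTq, heq⟩ := hstep k hkK q hq
      have hb := ftMid_bounds hn hQ hx hne
      have h1 : Q.inf' hne (t 0) + k * (T / ϑ) ≤ Q.inf' hne (t k) :=
        Finset.le_inf' hne _ (fun r hr => (ihb r hr).1)
      have h2 : Q.sup' hne (t k) ≤ Q.sup' hne (t 0) + k * (T + d) :=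
        Finset.sup'_le hne _ (fun r hr => (ihb r hr).2)
      have hTq1 := hTq.1
      have hTq2 := hTq.2
      constructor
      · rw [heq]; push_cast; linarith [hb.1]
      · rw [heq]; push_cast; linarith [hb.2]
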